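/- The characteristic polynomial of the matrix X_n equals Q(x) = x^n + n q_1 x^{n-1} + n(n-1) q_2 x^{n-2} + ... + n! q_n, where the coefficient of x^{n-k} is n(n-1)⋯(n-k+1) q_k. -/

import Mathlib

open Polynomial Matrix

/-- Newton coefficients defined recursively from power sums. -/
noncomputable def nq (x : ℕ → ℂ) : ℕ → ℂ
  | 0 => 1
  | (j+1) => (-((j:ℂ)+1))⁻¹ * ∑ t ∈ Finset.range (j+1), x (t+1) * nq x (j - t)

lemma nq_zero (x : ℕ → ℂ) : nq x 0 = 1 := by simp [nq]

lemma nq_newton (x : ℕ → ℂ) (j : ℕ) (hj : 1 ≤ j) :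
    (j : ℂ) * nq x j = -∑ t ∈ Finset.Icc 1 j, x t * nq x (j - t) := by
  obtain ⟨j, rfl⟩ := Nat.exists_eq_add_of_le hj
  rw [show 1 + j = j + 1 by ring]
  have h1 : ∑ t ∈ Finset.Icc 1 (j+1), x t * nq x (j + 1 - t)
      = ∑ t ∈ Finset.range (j+1), x (t+1) * nq x (j - t) := by
    refine Finset.sum_nbij' (fun t => t - 1) (fun t => t + 1) ?_ ?_ ?_ ?_ ?_
    · intro a ha; simp only [Finset.mem_Icc] at ha; simp only [Finset.mem_range]; omega
    · intro a ha; simp only [Finset.mem_range] at ha; simp only [Finset.mem_Icc]; omega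
    · intro a ha; simp only [Finset.mem_Icc] at ha; omega
    · intro a ha; simp only [Finset.mem_range] at ha; omega
    · intro a ha; simp only [Finset.mem_Icc] at ha
      congr 1 <;> [congr 1; congr 1] <;> omega
  rw [h1, nq, ← mul_assoc]
  have h2 : ((j:ℕ)+1 : ℂ) * (-((j:ℂ)+1))⁻¹ = -1 := by
    push_cast
    rw [show (-((j:ℂ)+1))⁻¹ = -(((j:ℂ)+1))⁻¹ by rw [neg_inv]]
    rw [mul_neg, mul_inv_cancel₀]
    · exact_mod_cast Nat.succ_ne_zero j
  push_cast at h2 ⊢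
  rw [h2]
  ring

lemma descFactorial_add_split (n a b : ℕ) :
    n.descFactorial (a + b) = n.descFactorial a * (n - a).descFactorial b := by
  induction b with
  | zero => simp
  | succ b ih =>
      rw [show a + (b+1) = (a+b)+1 from rfl, Nat.descFactorial_succ, ih,
        Nat.descFactorial_succ, show n - (a+b) = n - a - b by omega]
      ring

lemma descFactorial_split (m j : ℕ) (hj : 1 ≤ j) (hjm : j ≤ m + 1) :
    (m+1).descFactorial j = m.descFactorial j + j * m.descFactorial (j-1) := by
  obtain ⟨j, rfl⟩ := Nat.exists_eq_add_of_le hj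
  rw [show 1 + j = j + 1 from by omega]
  rw [Nat.succ_descFactorial_succ, Nat.descFactorial_succ, Nat.add_sub_cancel,
    ← Nat.add_mul]
  congr 1
  omega

lemma key_scalar (x : ℕ → ℂ) (m j : ℕ) (hj : j ≤ m + 1) :
    (((m+1).descFactorial j : ℕ) : ℂ) * nq x j =
      ((m.descFactorial j : ℕ) : ℂ) * nq x j -
      ∑ t ∈ Finset.Icc 1 j, ((m.descFactorial (t-1) : ℕ) : ℂ) * x t *
        (((m+1-t).descFactorial (j-t) : ℕ) : ℂ) * nq x (j-t) := by
  rcases Nat.eq_zero_or_pos j with rfl | hj1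
  · simp
  have hterm : ∀ t ∈ Finset.Icc 1 j,
      ((m.descFactorial (t-1) : ℕ) : ℂ) * x t * (((m+1-t).descFactorial (j-t) : ℕ) : ℂ)
        * nq x (j-t) = ((m.descFactorial (j-1) : ℕ) : ℂ) * (x t * nq x (j-t)) := by
    intro t ht
    simp only [Finset.mem_Icc] at ht
    have h := descFactorial_add_split m (t-1) (j-t)
    rw [show (t-1) + (j-t) = j - 1 by omega, show m - (t-1) = m+1-t by omega] at h
    rw [h]
    push_cast
    ring
  rw [Finset.sum_congr rfl hterm, ← Finset.mul_sum,
    show ∑ t ∈ Finset.Icc 1 j, x t * nq x (j - t) = -((j:ℂ) * nq x j) by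
      rw [nq_newton x j hj1]; ring]
  rw [show ((m+1).descFactorial j : ℕ) = m.descFactorial j + j * m.descFactorial (j-1) from
    descFactorial_split m j hj1 hj]
  push_cast
  ring

noncomputable def ent (x : ℕ → ℂ) (i j : ℕ) : Polynomial ℂ :=
  (if i = j then X else 0) - C (if j ≤ i then x (i-j+1) else if j = i+1 then (j:ℂ) else 0)

def Xmat (x : ℕ → ℂ) (m : ℕ) : Matrix (Fin m) (Fin m) ℂ :=
  fun i j => if (j:ℕ) ≤ (i:ℕ) then x ((i:ℕ) - (j:ℕ) + 1)
      else if (j:ℕ) = (i:ℕ) + 1 then ((j:ℕ) : ℂ) else 0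

noncomputable def Bm (x : ℕ → ℂ) (m : ℕ) (r : ℕ → Polynomial ℂ) :
    Matrix (Fin m) (Fin m) (Polynomial ℂ) :=
  fun i j => if (i:ℕ) + 1 = m then r (j:ℕ) else ent x (i:ℕ) (j:ℕ)

lemma charmatrix_Xmat (x : ℕ → ℂ) (m : ℕ) (i j : Fin m) :
    charmatrix (Xmat x m) i j = ent x (i:ℕ) (j:ℕ) := by
  rcases eq_or_ne i j with rfl | h
  · rw [charmatrix_apply_eq, ent, if_pos rfl]
    simp [Xmat]
  · rw [charmatrix_apply_ne _ _ _ h, ent,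
      if_neg (fun hc => h (Fin.ext hc)), zero_sub, Xmat]

lemma val_succAbove {n : ℕ} (p : Fin (n+1)) (i : Fin n) :
    ((p.succAbove i : Fin (n+1)) : ℕ) = if (i:ℕ) < (p:ℕ) then (i:ℕ) else (i:ℕ)+1 := by
  unfold Fin.succAbove
  split_ifs with h1 h2 h2 <;> simp_all [Fin.lt_def]

lemma det_Bm_succ (x : ℕ → ℂ) (m : ℕ) (r : ℕ → Polynomial ℂ) :
    (Bm x (m+1) r).det = r m * (Xmat x m).charpoly + ((m:ℕ) : Polynomial ℂ) * (Bm x m r).det := by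
  rcases m with _ | m
  · simp [Matrix.det_fin_one, Bm, Matrix.charpoly]
  rw [Matrix.det_succ_column (Bm x (m+1+1) r) (Fin.last (m+1)),
    Fin.sum_univ_castSucc, Fin.sum_univ_castSucc]
  have hzero : ∀ i : Fin m,
      (-1 : Polynomial ℂ) ^ (((Fin.castSucc (Fin.castSucc i)) : ℕ) + ((Fin.last (m+1)) : ℕ)) *
        (Bm x (m+1+1) r) (Fin.castSucc (Fin.castSucc i)) (Fin.last (m+1)) *
        (((Bm x (m+1+1) r).submatrix (Fin.castSucc (Fin.castSucc i)).succAbove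
          (Fin.last (m+1)).succAbove).det) = 0 := by
    intro i
    have hi : (i:ℕ) < m := i.isLt
    have : (Bm x (m+1+1) r) (Fin.castSucc (Fin.castSucc i)) (Fin.last (m+1)) = 0 := by
      simp only [Bm, Fin.coe_castSucc, Fin.val_last]
      rw [if_neg (by omega), ent, if_neg (by omega), if_neg (by omega), if_neg (by omega)]
      simp
    rw [this]; ring
  rw [Finset.sum_eq_zero (fun i _ => hzero i), zero_add]
  have hsub1 : ((Bm x (m+1+1) r).submatrix (Fin.last (m+1)).succAbove
      (Fin.last (m+1)).succAbove) = charmatrix (Xmat x (m+1)) := by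
    refine Matrix.ext fun i j => ?_
    rw [Matrix.submatrix_apply, Fin.succAbove_last, charmatrix_Xmat]
    simp only [Bm, Fin.coe_castSucc]
    rw [if_neg (by omega)]
  have hsub2 : ((Bm x (m+1+1) r).submatrix (Fin.castSucc (Fin.last m)).succAbove
      (Fin.last (m+1)).succAbove) = Bm x (m+1) r := by
    refine Matrix.ext fun i j => ?_
    rw [Matrix.submatrix_apply, Fin.succAbove_last]
    have hrow : (((Fin.castSucc (Fin.last m)).succAbove i : Fin (m+2)) : ℕ)
        = if (i:ℕ) < m then (i:ℕ) else (i:ℕ)+1 := by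
      rw [val_succAbove]; simp
    simp only [Bm, Fin.coe_castSucc, hrow]
    have hi := i.isLt
    rcases lt_or_ge (i:ℕ) m with h | h
    · have h1 : (if (i:ℕ) < m then (i:ℕ) else (i:ℕ)+1) = (i:ℕ) := if_pos h
      rw [h1, if_neg (by omega), if_neg (by omega)]
    · have h1 : (if (i:ℕ) < m then (i:ℕ) else (i:ℕ)+1) = (i:ℕ)+1 := if_neg (by omega)
      rw [h1, if_pos (by omega), if_pos (by omega)]
  rw [hsub1, hsub2]
  have hlast : (Bm x (m+1+1) r) (Fin.last (m+1)) (Fin.last (m+1)) = r (m+1) := by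
    simp [Bm]
  have hpen : (Bm x (m+1+1) r) (Fin.castSucc (Fin.last m)) (Fin.last (m+1))
      = -C (((m+1:ℕ)) : ℂ) := by
    simp only [Bm, Fin.coe_castSucc, Fin.val_last]
    rw [if_neg (by omega), ent, if_neg (by omega), if_neg (by omega), if_pos (by omega)]
    push_cast
    simp
  rw [hlast, hpen]
  simp only [Fin.coe_castSucc, Fin.val_last]
  rw [show (-1 : Polynomial ℂ) ^ (m + (m+1)) = -1 from Odd.neg_one_pow ⟨m, by ring⟩,
    show (-1 : Polynomial ℂ) ^ ((m+1) + (m+1)) = 1 from Even.neg_one_pow ⟨m+1, by ring⟩,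
    Matrix.charpoly, map_natCast C]
  push_cast
  ring

lemma det_Bm_closed (x : ℕ → ℂ) (m : ℕ) (r : ℕ → Polynomial ℂ) :
    (Bm x (m+1) r).det = ∑ k ∈ Finset.range (m+1),
      C ((m.descFactorial k : ℕ) : ℂ) * r (m-k) * (Xmat x (m-k)).charpoly := by
  induction m with
  | zero =>
      rw [det_Bm_succ]
      simp
  | succ m ih =>
      rw [det_Bm_succ, ih, Finset.mul_sum, add_comm]
      conv_rhs => rw [Finset.sum_range_succ' (fun k =>
        C ((((m+1).descFactorial k : ℕ)):ℂ) * r (m+1-k) * (Xmat x (m+1-k)).charpoly) (m+1)]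
      refine congrArg₂ (· + ·) ?_ ?_
      · refine Finset.sum_congr rfl fun k hk => ?_
        rw [Nat.succ_descFactorial_succ, show m+1-(k+1) = m-k by omega,
          Nat.cast_mul, _root_.map_mul, map_natCast C, map_natCast C]
        ring
      · simp

lemma charpoly_rec (x : ℕ → ℂ) (m : ℕ) :
    (Xmat x (m+1)).charpoly = ∑ k ∈ Finset.range (m+1),
      C ((m.descFactorial k : ℕ) : ℂ) * ((if k = 0 then (X : Polynomial ℂ) else 0)
        - C (x (k+1))) * (Xmat x (m-k)).charpoly := by
  have hB : charmatrix (Xmat x (m+1)) = Bm x (m+1) (fun j => ent x m j) := by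
    refine Matrix.ext fun i j => ?_
    rw [charmatrix_Xmat]
    simp only [Bm]
    rcases eq_or_ne ((i:ℕ)+1) (m+1) with h | h
    · rw [if_pos h]
      congr 1
      omega
    · rw [if_neg h]
  rw [Matrix.charpoly, hB, det_Bm_closed]
  refine Finset.sum_congr rfl fun k hk => ?_
  rw [Finset.mem_range] at hk
  have hent : ent x m (m-k) = (if k = 0 then (X : Polynomial ℂ) else 0) - C (x (k+1)) := by
    rw [ent]
    congr 1
    · by_cases h0 : k = 0
      · subst h0; rw [if_pos (by omega), if_pos rfl]
      · rw [if_neg (by omega), if_neg h0]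
    · rw [if_pos (by omega)]
      congr 2
      omega
  rw [hent]

noncomputable def Qp (x : ℕ → ℂ) (m : ℕ) : Polynomial ℂ :=
  ∑ j ∈ Finset.range (m+1), C (((m.descFactorial j : ℕ) : ℂ) * nq x j) * X^(m-j)

lemma Qp_succ (x : ℕ → ℂ) (m : ℕ) :
    Qp x (m+1) = X * Qp x m - ∑ k ∈ Finset.range (m+1),
      C (((m.descFactorial k : ℕ) : ℂ) * x (k+1)) * Qp x (m-k) := by
  have h1 : Qp x (m+1) = ∑ j ∈ Finset.range (m+2),
      (C (((m.descFactorial j : ℕ) : ℂ) * nq x j) * X^(m+1-j)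
       - ∑ t ∈ Finset.Icc 1 j, C (((m.descFactorial (t-1) : ℕ) : ℂ) * x t *
           (((m+1-t).descFactorial (j-t) : ℕ) : ℂ) * nq x (j-t)) * X^(m+1-j)) := by
    unfold Qp
    refine Finset.sum_congr rfl fun j hj => ?_
    rw [Finset.mem_range] at hj
    rw [key_scalar x m j (by omega), map_sub, map_sum, sub_mul, Finset.sum_mul]
  rw [h1, Finset.sum_sub_distrib]
  congr 1
  · rw [Finset.sum_range_succ]
    rw [show ((m.descFactorial (m+1) : ℕ) : ℂ) = 0 by
      rw [Nat.descFactorial_eq_zero_iff_lt.mpr (by omega)]; simp]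
    rw [zero_mul, map_zero, zero_mul, add_zero]
    unfold Qp
    rw [Finset.mul_sum]
    refine Finset.sum_congr rfl fun j hj => ?_
    rw [Finset.mem_range] at hj
    rw [show m+1-j = (m-j)+1 by omega, pow_succ]
    ring
  · have hexp : ∀ k ∈ Finset.range (m+1),
        C (((m.descFactorial k : ℕ) : ℂ) * x (k+1)) * Qp x (m-k)
        = ∑ l ∈ Finset.range (m-k+1), C (((m.descFactorial k : ℕ) : ℂ) * x (k+1) *
            (((m-k).descFactorial l : ℕ) : ℂ) * nq x l) * X^(m-k-l) := by
      intro k hk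
      unfold Qp
      rw [Finset.mul_sum]
      refine Finset.sum_congr rfl fun l hl => ?_
      rw [← mul_assoc, ← C_mul, show (((m.descFactorial k : ℕ) : ℂ) * x (k+1)) *
        ((((m-k).descFactorial l : ℕ) : ℂ) * nq x l) = ((m.descFactorial k : ℕ) : ℂ) * x (k+1) *
          (((m-k).descFactorial l : ℕ) : ℂ) * nq x l by ring]
    rw [Finset.sum_congr rfl hexp, Finset.sum_sigma', Finset.sum_sigma']
    refine Finset.sum_nbij' (fun p => ⟨p.2 - 1, p.1 - p.2⟩)
      (fun p => ⟨p.1 + p.2 + 1, p.1 + 1⟩) ?_ ?_ ?_ ?_ ?_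
    · rintro ⟨j, t⟩ hp
      simp only [Finset.mem_sigma, Finset.mem_range, Finset.mem_Icc] at hp ⊢
      omega
    · rintro ⟨k, l⟩ hp
      simp only [Finset.mem_sigma, Finset.mem_range, Finset.mem_Icc] at hp ⊢
      omega
    · rintro ⟨j, t⟩ hp
      simp only [Finset.mem_sigma, Finset.mem_range, Finset.mem_Icc] at hp
      simp only [Sigma.ext_iff, heq_eq_eq]
      omega
    · rintro ⟨k, l⟩ hp
      simp only [Finset.mem_sigma, Finset.mem_range, Finset.mem_Icc] at hp
      simp only [Sigma.ext_iff, heq_eq_eq]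
      omega
    · rintro ⟨j, t⟩ hp
      simp only [Finset.mem_sigma, Finset.mem_range, Finset.mem_Icc] at hp
      dsimp only
      rw [show t-1+1 = t by omega, show m - (t-1) = m+1-t by omega]
      rw [show m+1-t-(j-t) = m+1-j by omega]

lemma charpoly_Xmat (x : ℕ → ℂ) : ∀ m, (Xmat x m).charpoly = Qp x m := by
  intro m
  induction m using Nat.strong_induction_on with
  | _ m ih =>
    match m with
    | 0 =>
      rw [Matrix.charpoly, Matrix.det_fin_zero]
      unfold Qp
      simp [nq_zero]
    | (m+1) =>
      rw [charpoly_rec, Qp_succ]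
      have hih : ∀ k ∈ Finset.range (m+1),
          C ((m.descFactorial k : ℕ) : ℂ) * ((if k = 0 then (X : Polynomial ℂ) else 0)
            - C (x (k+1))) * (Xmat x (m-k)).charpoly
          = (C ((m.descFactorial k : ℕ) : ℂ) * (if k = 0 then (X : Polynomial ℂ) else 0)
              * Qp x (m-k)) - C (((m.descFactorial k : ℕ) : ℂ) * x (k+1)) * Qp x (m-k) := by
        intro k hk
        rw [ih (m-k) (by omega), C_mul]
        ring
      rw [Finset.sum_congr rfl hih, Finset.sum_sub_distrib]
      congr 1
      rw [Finset.sum_eq_single_of_mem 0 (Finset.mem_range.mpr (by omega))]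
      · simp
      · intro k hk hk0
        rw [if_neg hk0]
        ring

lemma coeff_prod_eq (n : ℕ) (μ : Fin n → ℂ) (j : ℕ) (hj : j ≤ n) :
    (∏ i, (X - C (μ i))).coeff (n - j) =
      (-1:ℂ)^j * (Finset.univ.val.map μ).esymm j := by
  have hcard : Multiset.card (Finset.univ.val.map μ) = n := by simp
  have hp : (∏ i, (X - C (μ i))) = ((Finset.univ.val.map μ).map (fun t => X - C t)).prod := by
    rw [Multiset.map_map]
    rfl
  rw [hp, Multiset.prod_X_sub_C_coeff _ (by rw [hcard]; omega), hcard,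
    show n - (n - j) = j by omega]

lemma newton_coeff (n : ℕ) (μ : Fin n → ℂ) (x : ℕ → ℂ) (hx : ∀ k, x k = ∑ i, μ i ^ k)
    (k : ℕ) (hk1 : 1 ≤ k) (hkn : k ≤ n) :
    (k : ℂ) * (∏ i, (X - C (μ i))).coeff (n - k) =
      -∑ t ∈ Finset.Icc 1 k, x t * (∏ i, (X - C (μ i))).coeff (n - (k - t)) := by
  classical
  set E : ℕ → ℂ := fun j => (Finset.univ.val.map μ).esymm j with hE
  have haevE : ∀ j, MvPolynomial.aeval μ (MvPolynomial.esymm (Fin n) ℂ j) = E j :=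
    fun j => MvPolynomial.aeval_esymm_eq_multiset_esymm (Fin n) ℂ j μ
  have haevP : ∀ j, MvPolynomial.aeval μ (MvPolynomial.psum (Fin n) ℂ j) = x j := by
    intro j
    rw [MvPolynomial.psum, map_sum, hx j]
    simp
  have hN := congrArg (MvPolynomial.aeval μ) (MvPolynomial.mul_esymm_eq_sum (Fin n) ℂ k)
  simp only [_root_.map_mul, map_sum, map_pow, _root_.map_neg, _root_.map_one, map_natCast,
    haevE, haevP] at hN
  have hre : (∑ a ∈ Finset.HasAntidiagonal.antidiagonal k with a.1 < k, (-1:ℂ)^a.1 * E a.1 * x a.2)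
      = ∑ t ∈ Finset.Icc 1 k, (-1:ℂ)^(k-t) * E (k-t) * x t := by
    refine Finset.sum_nbij' (fun a => a.2) (fun t => (k - t, t)) ?_ ?_ ?_ ?_ ?_
    · rintro ⟨a, b⟩ hp
      simp only [Finset.mem_filter, Finset.HasAntidiagonal.mem_antidiagonal] at hp
      simp only [Finset.mem_Icc]
      omega
    · intro t ht
      simp only [Finset.mem_Icc] at ht
      simp only [Finset.mem_filter, Finset.HasAntidiagonal.mem_antidiagonal]
      omega
    · rintro ⟨a, b⟩ hp
      simp only [Finset.mem_filter, Finset.HasAntidiagonal.mem_antidiagonal] at hp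
      simp only [Prod.mk.injEq]
      exact ⟨by omega, trivial⟩
    · intro t ht
      simp only
    · rintro ⟨a, b⟩ hp
      simp only [Finset.mem_filter, Finset.HasAntidiagonal.mem_antidiagonal] at hp
      dsimp only
      rw [show k - b = a by omega]
  rw [hre] at hN
  have hcc : ∀ j, j ≤ n → (∏ i, (X - C (μ i))).coeff (n - j) = (-1:ℂ)^j * E j :=
    fun j hj => coeff_prod_eq n μ j hj
  rw [hcc k hkn, show (k:ℂ) * ((-1:ℂ)^k * E k) = (-1:ℂ)^k * ((k:ℂ) * E k) by ring, hN,
    ← mul_assoc, show (-1:ℂ)^k * (-1:ℂ)^(k+1) = -1 by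
      rw [← pow_add]; exact Odd.neg_one_pow ⟨k, by ring⟩]
  rw [neg_one_mul, neg_inj]
  refine Finset.sum_congr rfl fun t ht => ?_
  simp only [Finset.mem_Icc] at ht
  rw [hcc (k-t) (by omega)]
  ring

lemma coeff_eq_nq (n : ℕ) (μ : Fin n → ℂ) (x : ℕ → ℂ) (hx : ∀ k, x k = ∑ i, μ i ^ k) :
    ∀ k, k ≤ n → (∏ i, (X - C (μ i))).coeff (n - k) = nq x k := by
  intro k
  induction k using Nat.strong_induction_on with
  | _ k ih =>
    intro hkn
    match k with
    | 0 =>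
      have hm : (∏ i, (X - C (μ i))).Monic :=
        monic_prod_of_monic _ _ (fun i _ => monic_X_sub_C (μ i))
      have hdeg : (∏ i, (X - C (μ i))).natDegree = n := by
        rw [Polynomial.natDegree_prod _ _ (fun i _ => X_sub_C_ne_zero (μ i))]
        simp
      rw [Nat.sub_zero, nq_zero]
      have := hm.coeff_natDegree
      rwa [hdeg] at this
    | (k+1) =>
      have h1 := newton_coeff n μ x hx (k+1) (by omega) hkn
      have h2 : ∑ t ∈ Finset.Icc 1 (k+1), x t * (∏ i, (X - C (μ i))).coeff (n - (k+1 - t))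
          = ∑ t ∈ Finset.Icc 1 (k+1), x t * nq x (k+1-t) := by
        refine Finset.sum_congr rfl fun t ht => ?_
        simp only [Finset.mem_Icc] at ht
        rw [ih (k+1-t) (by omega) (by omega)]
      rw [h2] at h1
      rw [← nq_newton x (k+1) (by omega)] at h1
      exact mul_left_cancel₀ (by exact_mod_cast Nat.succ_ne_zero k) h1

/-- The characteristic polynomial of X_n is
    Q(x) = x^n + n q₁ x^{n-1} + n(n-1) q₂ x^{n-2} + ... + n! qₙ,
    where q_k is the coefficient of x^{n-k} in ∏(x - μᵢ). -/
theorem charpoly_newton_matrix (n : ℕ) (μ : Fin n → ℂ)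
    (x : ℕ → ℂ) (hx : ∀ k, x k = ∑ i, μ i ^ k)
    (Xn : Matrix (Fin n) (Fin n) ℂ)
    (hXn : ∀ i j : Fin n, Xn i j =
      if (j : ℕ) ≤ (i : ℕ) then x ((i : ℕ) - (j : ℕ) + 1)
      else if (j : ℕ) = (i : ℕ) + 1 then ((j : ℕ) : ℂ) else 0) :
    Xn.charpoly = X ^ n + ∑ k ∈ Finset.Icc 1 n,
      C ((n.descFactorial k : ℂ) * (∏ i, (X - C (μ i))).coeff (n - k)) * X ^ (n - k) := by
  have hX : Xn = Xmat x n := by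
    refine Matrix.ext fun i j => ?_
    rw [hXn]
    rfl
  rw [hX, charpoly_Xmat]
  unfold Qp
  rw [Finset.sum_range_succ', add_comm]
  congr 1
  · simp [nq_zero]
  · refine Finset.sum_nbij' (fun j => j+1) (fun k => k-1) ?_ ?_ ?_ ?_ ?_
    · intro j hj
      simp only [Finset.mem_range] at hj
      simp only [Finset.mem_Icc]
      omega
    · intro k hk
      simp only [Finset.mem_Icc] at hk
      simp only [Finset.mem_range]
      omega
    · intro j hj
      omega
    · intro k hk
      simp only [Finset.mem_Icc] at hk
      omega
    · intro j hj
      simp only [Finset.mem_range] at hj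
      rw [coeff_eq_nq n μ x hx (j+1) (by omega)]
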